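/- Let G be a connected simple graph on a finite vertex type V and let p be a vertex of G. Then there exists a vertex v and an Eulerian walk in G from p to v (a walk starting at p that traverses every edge of G exactly once) if and only if at most one vertex of G other than p has odd degree, i.e., the set {w : V | w ≠ p and the degree of w in G is odd} has cardinality at most 1. -/

import Mathlib

open SimpleGraph Finset

section EulerHelpers

variable {V : Type*} [Fintype V] [DecidableEq V]

/-- The graph obtained by deleting the edges of a walk. -/
private def delW (K : SimpleGraph V) {x y : V} (c : K.Walk x y) : SimpleGraph V :=
  K.deleteEdges {e | e ∈ c.edges}

private lemma delW_adj {K : SimpleGraph V} {x y : V} {c : K.Walk x y} {a b : V} :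
    (delW K c).Adj a b ↔ K.Adj a b ∧ s(a, b) ∉ c.edges := by
  simp [delW]

private instance delW_decAdj (K : SimpleGraph V) [DecidableRel K.Adj] {x y : V}
    (c : K.Walk x y) : DecidableRel (delW K c).Adj := fun a b =>
  decidable_of_iff (K.Adj a b ∧ s(a, b) ∉ c.edges) delW_adj.symm

private lemma delW_le {K : SimpleGraph V} {x y : V} {c : K.Walk x y} : delW K c ≤ K :=
  deleteEdges_le _

private lemma mem_edgeSet_delW {K : SimpleGraph V} {x y : V} {c : K.Walk x y} {e : Sym2 V} :
    e ∈ (delW K c).edgeSet ↔ e ∈ K.edgeSet ∧ e ∉ c.edges := by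
  rw [delW, edgeSet_deleteEdges]; simp

private lemma walk_reach {K : SimpleGraph V} {x y w : V} (c : K.Walk x y)
    (h : w ∈ c.support) : K.Reachable x w :=
  ⟨c.takeUntil w h⟩

/-- Reachability surgery: after deleting the edges of a walk `c`, any vertex reachable
from `z` is still reachable from `z` or from some vertex of `c`. -/
private lemma reach_or {K : SimpleGraph V} {x y : V} (c : K.Walk x y) :
    ∀ {z a : V}, K.Walk z a →
      (delW K c).Reachable z a ∨ ∃ w ∈ c.support, (delW K c).Reachable w a := by
  intro z a q
  induction q with
  | nil => exact Or.inl (Reachable.refl _)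
  | @cons z u a h q ih =>
    rcases ih with h1 | h2
    · by_cases he : s(z, u) ∈ c.edges
      · exact Or.inr ⟨u, c.snd_mem_support_of_mem_edges he, h1⟩
      · exact Or.inl ((delW_adj.mpr ⟨h, he⟩).reachable.trans h1)
    · exact Or.inr h2

set_option linter.unusedSectionVars false

private lemma delW_neighborFinset {K : SimpleGraph V} [DecidableRel K.Adj] {x y : V}
    (c : K.Walk x y) (w : V) :
    (delW K c).neighborFinset w = (K.neighborFinset w).filter (fun v => s(w, v) ∉ c.edges) := by
  ext v
  simp [mem_neighborFinset, delW_adj]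

private lemma count_filter_eq {K : SimpleGraph V} [DecidableRel K.Adj] {x y : V}
    (c : K.Walk x y) (hc : c.edges.Nodup) (w : V) :
    #((K.neighborFinset w).filter (fun v => s(w, v) ∈ c.edges))
      = c.edges.countP (fun e => w ∈ e) := by
  rw [List.countP_eq_length_filter, ← List.toFinset_card_of_nodup (hc.filter _)]
  apply Finset.card_bij (fun v _ => s(w, v))
  · intro a ha
    rw [Finset.mem_filter] at ha
    simp only [List.mem_toFinset, List.mem_filter]
    exact ⟨ha.2, by simp⟩
  · intro a ha b hb hab
    exact Sym2.congr_right.mp hab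
  · intro e he
    simp only [List.mem_toFinset, List.mem_filter, decide_eq_true_eq] at he
    obtain ⟨v, rfl⟩ := Sym2.mem_iff_exists.mp he.2
    refine ⟨v, ?_, rfl⟩
    rw [Finset.mem_filter, mem_neighborFinset]
    exact ⟨(K.mem_edgeSet).mp (c.edges_subset_edgeSet he.1), he.1⟩

private lemma delW_degree {K : SimpleGraph V} [DecidableRel K.Adj] {x y : V}
    (c : K.Walk x y) (hc : c.edges.Nodup) (w : V) :
    (delW K c).degree w = K.degree w - c.edges.countP (fun e => w ∈ e)
      ∧ c.edges.countP (fun e => w ∈ e) ≤ K.degree w := by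
  have h1 : (delW K c).degree w
      = #((K.neighborFinset w).filter (fun v => s(w, v) ∉ c.edges)) := by
    rw [← card_neighborFinset_eq_degree, delW_neighborFinset c w]
  have h2 := Finset.card_filter_add_card_filter_not
    (s := K.neighborFinset w) (p := fun v => s(w, v) ∈ c.edges)
  rw [count_filter_eq c hc w, card_neighborFinset_eq_degree] at h2
  constructor
  · rw [h1]; omega
  · omega

private lemma delW_parity {K : SimpleGraph V} [DecidableRel K.Adj] {x y : V}
    (c : K.Walk x y) (hc : c.edges.Nodup) (w : V) :
    (Even ((delW K c).degree w)
      ↔ (Even (K.degree w) ↔ Even (c.edges.countP (fun e => w ∈ e)))) := by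
  obtain ⟨h1, h2⟩ := delW_degree c hc w
  rw [h1, Nat.even_sub h2]

private lemma single_countP {K : SimpleGraph V} {p q : V} (hadj : K.Adj p q) (w : V) :
    hadj.toWalk.edges.countP (fun e => w ∈ e) = if w = p ∨ w = q then 1 else 0 := by
  simp only [Adj.toWalk, Walk.edges_cons, Walk.edges_nil, List.countP_cons, List.countP_nil,
    Sym2.mem_iff, zero_add]
  by_cases h : w = p ∨ w = q <;> simp [h]

private lemma single_nodup {K : SimpleGraph V} {p q : V} (hadj : K.Adj p q) :
    hadj.toWalk.edges.Nodup := by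
  simp [Adj.toWalk]

private lemma single_trail {K : SimpleGraph V} {p q : V} (hadj : K.Adj p q) :
    hadj.toWalk.IsTrail := by
  rw [Walk.isTrail_def]; exact single_nodup hadj

private lemma single_support {K : SimpleGraph V} {p q : V} (hadj : K.Adj p q) :
    hadj.toWalk.support = [p, q] := by
  simp [Adj.toWalk]

private lemma reach_eq_of_deg_zero {K : SimpleGraph V} [DecidableRel K.Adj] {p a : V}
    (h : K.degree p = 0) (hr : K.Reachable p a) : a = p := by
  obtain ⟨w⟩ := hr
  cases w with
  | nil => rfl
  | cons hadj _ =>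
    have := (K.degree_pos_iff_exists_adj p).mpr ⟨_, hadj⟩
    omega

private lemma exists_odd_reachable {K : SimpleGraph V} [DecidableRel K.Adj] {q : V}
    (h : Odd (K.degree q)) : ∃ w, w ≠ q ∧ K.Reachable q w ∧ Odd (K.degree w) := by
  let K₂ : SimpleGraph V :=
    { Adj := fun a b => K.Adj a b ∧ K.Reachable q a
      symm := ⟨by rintro a b ⟨h1, h2⟩; exact ⟨h1.symm, h2.trans h1.reachable⟩⟩
      loopless := ⟨fun a hab => K.loopless.irrefl a hab.1⟩ }
  haveI : DecidableRel K₂.Adj := fun a b =>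
    inferInstanceAs (Decidable (K.Adj a b ∧ K.Reachable q a))
  have hdeg : ∀ w, K.Reachable q w → K₂.degree w = K.degree w := by
    intro w hw
    rw [← card_neighborFinset_eq_degree, ← card_neighborFinset_eq_degree]
    congr 1
    ext v
    simp only [mem_neighborFinset]
    exact ⟨fun h => h.1, fun h => ⟨h, hw⟩⟩
  have hq2 : Odd (K₂.degree q) := by rw [hdeg q (Reachable.refl q)]; exact h
  have hodd := K₂.odd_card_odd_degree_vertices_ne q hq2
  have hpos : 0 < #({w | w ≠ q ∧ Odd (K₂.degree w)} : Finset V) := by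
    rcases Nat.eq_zero_or_pos #({w | w ≠ q ∧ Odd (K₂.degree w)} : Finset V) with h0 | h0
    · rw [h0] at hodd; simp at hodd
    · exact h0
  obtain ⟨w, hw⟩ := Finset.card_pos.mp hpos
  rw [Finset.mem_filter] at hw
  have hwodd : Odd (K₂.degree w) := hw.2.2
  obtain ⟨v, hv⟩ := (K₂.degree_pos_iff_exists_adj w).mp hwodd.pos
  have hreach : K.Reachable q w := hv.2
  exact ⟨w, hw.2.1, hreach, by rw [← hdeg w hreach]; exact hwodd⟩

private lemma delW_card_le {K : SimpleGraph V} [DecidableRel K.Adj] {x y : V} (c : K.Walk x y) :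
    (delW K c).edgeFinset.card ≤ K.edgeFinset.card :=
  Finset.card_le_card (edgeFinset_subset_edgeFinset.mpr delW_le)

private lemma delW_card_lt {K : SimpleGraph V} [DecidableRel K.Adj] {x y : V} (c : K.Walk x y)
    {e : Sym2 V} (he : e ∈ c.edges) :
    (delW K c).edgeFinset.card < K.edgeFinset.card := by
  apply Finset.card_lt_card
  rw [edgeFinset_ssubset_edgeFinset]
  refine lt_of_le_of_ne delW_le (fun heq => ?_)
  have h1 : e ∉ (delW K c).edgeSet := fun hh => (mem_edgeSet_delW.mp hh).2 he
  rw [heq] at h1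
  exact h1 (c.edges_subset_edgeSet he)

private lemma euler_main (n : ℕ) :
    ∀ (H : SimpleGraph V) [DecidableRel H.Adj], H.edgeFinset.card ≤ n →
      ((∀ p : V, (∀ w, H.Reachable p w → Even (H.degree w)) →
          ∃ c : H.Walk p p, c.IsTrail ∧
            ∀ a b, H.Adj a b → H.Reachable p a → s(a, b) ∈ c.edges) ∧
       (∀ p x : V, p ≠ x → Odd (H.degree p) → Odd (H.degree x) →
          (∀ w, w ≠ p → w ≠ x → H.Reachable p w → Even (H.degree w)) →
          ∃ W : H.Walk p x, W.IsTrail ∧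
            ∀ a b, H.Adj a b → (H.Reachable p a ∨ H.Reachable x a) → s(a, b) ∈ W.edges)) := by
  induction n with
  | zero =>
    intro H _ hcard
    have hno : ∀ a b : V, ¬H.Adj a b := by
      intro a b hab
      have hm : s(a, b) ∈ H.edgeFinset := mem_edgeFinset.mpr hab
      have := Finset.card_pos.mpr ⟨_, hm⟩
      omega
    constructor
    · intro p _
      exact ⟨Walk.nil, Walk.IsTrail.nil, fun a b hab _ => absurd hab (hno a b)⟩
    · intro p x _ hop _ _
      exfalso
      have hdeg0 : H.degree p = 0 := by
        rw [← card_neighborFinset_eq_degree, Finset.card_eq_zero]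
        ext v; simp [mem_neighborFinset, hno]
      rw [hdeg0] at hop
      simp at hop
  | succ n IH =>
    intro H instH hcard
    constructor
    · -- closed case
      intro p heven
      by_cases hp : H.degree p = 0
      · refine ⟨Walk.nil, Walk.IsTrail.nil, fun a b hab hr => ?_⟩
        exfalso
        have ha : a = p := reach_eq_of_deg_zero hp hr
        subst ha
        have := (H.degree_pos_iff_exists_adj a).mpr ⟨b, hab⟩
        omega
      · obtain ⟨q, hpq⟩ := (H.degree_pos_iff_exists_adj p).mp (Nat.pos_of_ne_zero hp)
        have hecard : (delW H hpq.toWalk).edgeFinset.card ≤ n := by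
          have := delW_card_lt hpq.toWalk (e := s(p, q)) (by simp [Adj.toWalk])
          omega
        have hq_even : Even (H.degree q) := heven q hpq.reachable
        have hp_even : Even (H.degree p) := heven p (Reachable.refl p)
        have h1 : Odd ((delW H hpq.toWalk).degree p) := by
          rw [← Nat.not_even_iff_odd, delW_parity hpq.toWalk (single_nodup hpq) p,
            single_countP hpq p]
          simp [hp_even, Nat.even_iff]
        have h2 : Odd ((delW H hpq.toWalk).degree q) := by
          rw [← Nat.not_even_iff_odd, delW_parity hpq.toWalk (single_nodup hpq) q,
            single_countP hpq q]
          simp [hq_even, Nat.even_iff]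
        have h3 : ∀ w, w ≠ q → w ≠ p → (delW H hpq.toWalk).Reachable q w →
            Even ((delW H hpq.toWalk).degree w) := by
          intro w hwq hwp hr
          have hrH : H.Reachable p w := hpq.reachable.trans (hr.mono delW_le)
          rw [delW_parity hpq.toWalk (single_nodup hpq) w, single_countP hpq w]
          simp [hwp, hwq, heven w hrH]
        obtain ⟨W₁, hW₁t, hW₁c⟩ := (IH (delW H hpq.toWalk) hecard).2 q p hpq.ne' h2 h1 h3
        have hWedges : ∀ e ∈ W₁.edges, e ∈ H.edgeSet := fun e he =>
          (mem_edgeSet_delW.mp (W₁.edges_subset_edgeSet he)).1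
        refine ⟨Walk.cons hpq (W₁.transfer H hWedges), ?_, ?_⟩
        · rw [Walk.isTrail_cons]
          constructor
          · rw [Walk.isTrail_def, Walk.edges_transfer]; exact hW₁t.edges_nodup
          · rw [Walk.edges_transfer]
            intro hmem
            exact (mem_edgeSet_delW.mp (W₁.edges_subset_edgeSet hmem)).2 (by simp [Adj.toWalk])
        · intro a b hab hr
          rw [Walk.edges_cons, Walk.edges_transfer]
          by_cases he : s(a, b) = s(p, q)
          · rw [he]; exact List.mem_cons_self
          · have hab₁ : (delW H hpq.toWalk).Adj a b := delW_adj.mpr ⟨hab, by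
              simp only [Adj.toWalk, Walk.edges_cons, Walk.edges_nil, List.mem_singleton]
              exact he⟩
            obtain ⟨wk⟩ := hr
            have hreach : (delW H hpq.toWalk).Reachable q a ∨
                (delW H hpq.toWalk).Reachable p a := by
              rcases reach_or hpq.toWalk wk with h1' | ⟨w, hw, h2'⟩
              · exact Or.inr h1'
              · rw [single_support hpq] at hw
                simp only [List.mem_cons, List.mem_singleton, List.not_mem_nil, or_false] at hw
                rcases hw with rfl | rfl
                · exact Or.inr h2'
                · exact Or.inl h2'
            exact List.mem_cons_of_mem _ (hW₁c a b hab₁ hreach)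
    · -- open case
      intro p x hpx hop hox heven
      have hreach_px : H.Reachable p x := by
        obtain ⟨w, hwne, hwr, hwodd⟩ := exists_odd_reachable hop
        by_cases hwx : w = x
        · exact hwx ▸ hwr
        · exact absurd (heven w hwne hwx hwr) (Nat.not_even_iff_odd.mpr hwodd)
      obtain ⟨q, hpq⟩ := (H.degree_pos_iff_exists_adj p).mp hop.pos
      have hecard : (delW H hpq.toWalk).edgeFinset.card ≤ n := by
        have := delW_card_lt hpq.toWalk (e := s(p, q)) (by simp [Adj.toWalk])
        omega
      by_cases hqx : q = x
      · subst hqx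
        -- the deleted edge is p-x; everything is even afterwards
        have heven₁ : ∀ w, H.Reachable p w → Even ((delW H hpq.toWalk).degree w) := by
          intro w hw
          rw [delW_parity hpq.toWalk (single_nodup hpq) w, single_countP hpq w]
          by_cases hwp : w = p
          · subst hwp; simp [Nat.even_iff, Nat.odd_iff.mp hop]
          · by_cases hwq : w = q
            · subst hwq; simp [Nat.even_iff, Nat.odd_iff.mp hox]
            · simp [hwp, hwq, heven w hwp hwq hw]
        obtain ⟨c₁, hc₁t, hc₁c⟩ := (IH _ hecard).1 p
          (fun w hw => heven₁ w (hw.mono delW_le))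
        have hecard₂ : (delW (delW H hpq.toWalk) c₁).edgeFinset.card ≤ n :=
          le_trans (delW_card_le c₁) hecard
        have heven₂ : ∀ w, (delW (delW H hpq.toWalk) c₁).Reachable q w →
            Even ((delW (delW H hpq.toWalk) c₁).degree w) := by
          intro w hw
          have hwH : H.Reachable p w := hreach_px.trans ((hw.mono delW_le).mono delW_le)
          rw [delW_parity c₁ hc₁t.edges_nodup w]
          exact iff_of_true (heven₁ w hwH)
            ((hc₁t.even_countP_edges_iff w).mpr (fun h => absurd rfl h))
        obtain ⟨c₂, hc₂t, hc₂c⟩ := (IH _ hecard₂).1 q heven₂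
        have hc₁E : ∀ e ∈ c₁.edges, e ∈ H.edgeSet := fun e he =>
          (mem_edgeSet_delW.mp (c₁.edges_subset_edgeSet he)).1
        have hc₂E : ∀ e ∈ c₂.edges, e ∈ H.edgeSet := fun e he =>
          (mem_edgeSet_delW.mp ((mem_edgeSet_delW.mp (c₂.edges_subset_edgeSet he)).1)).1
        refine ⟨(c₁.transfer H hc₁E).append (Walk.cons hpq (c₂.transfer H hc₂E)), ?_, ?_⟩
        · rw [Walk.isTrail_def, Walk.edges_append, Walk.edges_cons, Walk.edges_transfer,
            Walk.edges_transfer, List.nodup_append]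
          refine ⟨hc₁t.edges_nodup, ?_, ?_⟩
          · rw [List.nodup_cons]
            refine ⟨fun hm => ?_, hc₂t.edges_nodup⟩
            exact (mem_edgeSet_delW.mp
              ((mem_edgeSet_delW.mp (c₂.edges_subset_edgeSet hm)).1)).2 (by simp [Adj.toWalk])
          · intro e he b hm heq
            subst heq
            rcases List.mem_cons.mp hm with rfl | hm2
            · exact (mem_edgeSet_delW.mp (c₁.edges_subset_edgeSet he)).2 (by simp [Adj.toWalk])
            · exact (mem_edgeSet_delW.mp (c₂.edges_subset_edgeSet hm2)).2 he
        · intro a b hab hr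
          have hrp : H.Reachable p a := by
            rcases hr with h | h
            · exact h
            · exact hreach_px.trans h
          rw [Walk.edges_append, Walk.edges_cons, Walk.edges_transfer, Walk.edges_transfer]
          by_cases he : s(a, b) = s(p, q)
          · rw [he]; exact List.mem_append_right _ (List.mem_cons_self)
          · have hab₁ : (delW H hpq.toWalk).Adj a b := delW_adj.mpr ⟨hab, by
              simp only [Adj.toWalk, Walk.edges_cons, Walk.edges_nil, List.mem_singleton]
              exact he⟩
            obtain ⟨wk⟩ := hrp
            have hor : (delW H hpq.toWalk).Reachable p a ∨
                (delW H hpq.toWalk).Reachable q a := by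
              rcases reach_or hpq.toWalk wk with h1' | ⟨w, hw, h2'⟩
              · exact Or.inl h1'
              · rw [single_support hpq] at hw
                simp only [List.mem_cons, List.mem_singleton, List.not_mem_nil, or_false] at hw
                rcases hw with rfl | rfl
                · exact Or.inl h2'
                · exact Or.inr h2'
            by_cases hin : s(a, b) ∈ c₁.edges
            · exact List.mem_append_left _ hin
            rcases hor with hP | hX
            · exact (hin (hc₁c a b hab₁ hP)).elim
            · have hab₂ : (delW (delW H hpq.toWalk) c₁).Adj a b := delW_adj.mpr ⟨hab₁, hin⟩
              obtain ⟨wk₂⟩ := hX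
              rcases reach_or c₁ wk₂ with h2' | ⟨w, hw, h2'⟩
              · exact List.mem_append_right _ (List.mem_cons_of_mem _ (hc₂c a b hab₂ h2'))
              · have : (delW H hpq.toWalk).Reachable p a :=
                  (walk_reach c₁ hw).trans (h2'.mono delW_le)
                exact (hin (hc₁c a b hab₁ this)).elim
      · -- q ≠ x : after deleting p-q, exactly q and x are odd
        have hq_even : Even (H.degree q) := heven q hpq.ne' hqx hpq.reachable
        have hK1even : ∀ w, H.Reachable p w → w ≠ q → w ≠ x →
            Even ((delW H hpq.toWalk).degree w) := by
          intro w hw hwq hwx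
          rw [delW_parity hpq.toWalk (single_nodup hpq) w, single_countP hpq w]
          by_cases hwp : w = p
          · subst hwp; simp [Nat.even_iff, Nat.odd_iff.mp hop]
          · simp [hwp, hwq, heven w hwp hwx hw]
        have h1 : Odd ((delW H hpq.toWalk).degree q) := by
          rw [← Nat.not_even_iff_odd, delW_parity hpq.toWalk (single_nodup hpq) q,
            single_countP hpq q]
          simp [hq_even, Nat.even_iff]
        have h2 : Odd ((delW H hpq.toWalk).degree x) := by
          rw [← Nat.not_even_iff_odd, delW_parity hpq.toWalk (single_nodup hpq) x,
            single_countP hpq x]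
          have hxp : ¬(x = p) := fun h => hpx h.symm
          have hxq : ¬(x = q) := fun h => hqx h.symm
          simp [hxp, hxq, Nat.even_iff, Nat.odd_iff.mp hox]
        have h3 : ∀ w, w ≠ q → w ≠ x → (delW H hpq.toWalk).Reachable q w →
            Even ((delW H hpq.toWalk).degree w) := by
          intro w hwq hwx hr
          exact hK1even w (hpq.reachable.trans (hr.mono delW_le)) hwq hwx
        obtain ⟨W₁, hW₁t, hW₁c⟩ := (IH _ hecard).2 q x hqx h1 h2 h3
        have hecard₂ : (delW (delW H hpq.toWalk) W₁).edgeFinset.card ≤ n :=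
          le_trans (delW_card_le W₁) hecard
        have heven₂ : ∀ w, (delW (delW H hpq.toWalk) W₁).Reachable p w →
            Even ((delW (delW H hpq.toWalk) W₁).degree w) := by
          intro w hw
          have hwH : H.Reachable p w := (hw.mono delW_le).mono delW_le
          rw [delW_parity W₁ hW₁t.edges_nodup w]
          have hcount := hW₁t.even_countP_edges_iff w
          by_cases hwq : w = q
          · subst hwq
            exact iff_of_false (Nat.not_even_iff_odd.mpr h1)
              (fun hE => (hcount.mp hE hqx).1 rfl)
          · by_cases hwx : w = x
            · subst hwx
              exact iff_of_false (Nat.not_even_iff_odd.mpr h2)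
                (fun hE => (hcount.mp hE hqx).2 rfl)
            · exact iff_of_true (hK1even w hwH hwq hwx) (hcount.mpr (fun _ => ⟨hwq, hwx⟩))
        obtain ⟨c, hct, hcc⟩ := (IH _ hecard₂).1 p heven₂
        have hcE : ∀ e ∈ c.edges, e ∈ H.edgeSet := fun e he =>
          (mem_edgeSet_delW.mp ((mem_edgeSet_delW.mp (c.edges_subset_edgeSet he)).1)).1
        have hWE : ∀ e ∈ W₁.edges, e ∈ H.edgeSet := fun e he =>
          (mem_edgeSet_delW.mp (W₁.edges_subset_edgeSet he)).1
        refine ⟨(c.transfer H hcE).append (Walk.cons hpq (W₁.transfer H hWE)), ?_, ?_⟩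
        · rw [Walk.isTrail_def, Walk.edges_append, Walk.edges_cons, Walk.edges_transfer,
            Walk.edges_transfer, List.nodup_append]
          refine ⟨hct.edges_nodup, ?_, ?_⟩
          · rw [List.nodup_cons]
            refine ⟨fun hm => ?_, hW₁t.edges_nodup⟩
            exact (mem_edgeSet_delW.mp (W₁.edges_subset_edgeSet hm)).2 (by simp [Adj.toWalk])
          · intro e he b hm heq
            subst heq
            rcases List.mem_cons.mp hm with rfl | hm2
            · exact (mem_edgeSet_delW.mp
                ((mem_edgeSet_delW.mp (c.edges_subset_edgeSet he)).1)).2 (by simp [Adj.toWalk])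
            · exact (mem_edgeSet_delW.mp (c.edges_subset_edgeSet he)).2 hm2
        · intro a b hab hr
          have hrp : H.Reachable p a := by
            rcases hr with h | h
            · exact h
            · exact hreach_px.trans h
          rw [Walk.edges_append, Walk.edges_cons, Walk.edges_transfer, Walk.edges_transfer]
          by_cases he : s(a, b) = s(p, q)
          · rw [he]; exact List.mem_append_right _ (List.mem_cons_self)
          · have hab₁ : (delW H hpq.toWalk).Adj a b := delW_adj.mpr ⟨hab, by
              simp only [Adj.toWalk, Walk.edges_cons, Walk.edges_nil, List.mem_singleton]
              exact he⟩
            obtain ⟨wk⟩ := hrp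
            have hor : (delW H hpq.toWalk).Reachable p a ∨
                (delW H hpq.toWalk).Reachable q a := by
              rcases reach_or hpq.toWalk wk with h1' | ⟨w, hw, h2'⟩
              · exact Or.inl h1'
              · rw [single_support hpq] at hw
                simp only [List.mem_cons, List.mem_singleton, List.not_mem_nil, or_false] at hw
                rcases hw with rfl | rfl
                · exact Or.inl h2'
                · exact Or.inr h2'
            rcases hor with hP | hQ
            · by_cases hin : s(a, b) ∈ W₁.edges
              · exact List.mem_append_right _ (List.mem_cons_of_mem _ hin)
              · have hab₂ : (delW (delW H hpq.toWalk) W₁).Adj a b := delW_adj.mpr ⟨hab₁, hin⟩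
                obtain ⟨wk₂⟩ := hP
                rcases reach_or W₁ wk₂ with h2' | ⟨w, hw, h2'⟩
                · exact List.mem_append_left _ (hcc a b hab₂ h2')
                · have : (delW H hpq.toWalk).Reachable q a :=
                    (walk_reach W₁ hw).trans (h2'.mono delW_le)
                  exact (hin (hW₁c a b hab₁ (Or.inl this))).elim
            · exact List.mem_append_right _ (List.mem_cons_of_mem _ (hW₁c a b hab₁ (Or.inl hQ)))

end EulerHelpers

theorem eulerian_walk_from_iff {V : Type*} [Fintype V] [DecidableEq V]
    (G : SimpleGraph V) [DecidableRel G.Adj] (hG : G.Connected) (p : V) :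
    (∃ (v : V) (w : G.Walk p v), w.IsEulerian) ↔
      (Finset.univ.filter (fun w : V => w ≠ p ∧ Odd (G.degree w))).card ≤ 1 := by
  constructor
  · rintro ⟨v, w, hw⟩
    have hsub : (Finset.univ.filter (fun y : V => y ≠ p ∧ Odd (G.degree y))) ⊆ {v} := by
      intro y hy
      rw [Finset.mem_filter] at hy
      rw [Finset.mem_singleton]
      have hodd := hy.2.2
      have hiff := hw.even_degree_iff (x := y)
      by_cases hpv : p = v
      · exact absurd (hiff.mpr (fun h => absurd hpv h)) (Nat.not_even_iff_odd.mpr hodd)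
      · by_contra hyv
        exact Nat.not_even_iff_odd.mpr hodd (hiff.mpr (fun _ => ⟨hy.2.1, hyv⟩))
    calc _ ≤ ({v} : Finset V).card := Finset.card_le_card hsub
      _ = 1 := Finset.card_singleton v
  · intro h
    rcases Nat.le_one_iff_eq_zero_or_eq_one.mp h with h0 | h1
    · -- all degrees even
      have hF := Finset.card_eq_zero.mp h0
      have heven_all : ∀ w : V, w ≠ p → Even (G.degree w) := by
        intro w hwp
        by_contra hwe
        have : w ∈ (Finset.univ.filter (fun w : V => w ≠ p ∧ Odd (G.degree w))) := by
          rw [Finset.mem_filter]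
          exact ⟨Finset.mem_univ w, hwp, Nat.not_even_iff_odd.mp hwe⟩
        rw [hF] at this
        exact absurd this (Finset.notMem_empty w)
      have hp_even : Even (G.degree p) := by
        by_contra hpe
        have hodd := G.odd_card_odd_degree_vertices_ne p (Nat.not_even_iff_odd.mp hpe)
        rw [show ({w | w ≠ p ∧ Odd (G.degree w)} : Finset V)
          = Finset.univ.filter (fun w : V => w ≠ p ∧ Odd (G.degree w)) from rfl, h0] at hodd
        simp at hodd
      obtain ⟨c, hct, hcc⟩ := (euler_main (G.edgeFinset.card) G le_rfl).1 p
        (fun w _ => by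
          by_cases hwp : w = p
          · exact hwp ▸ hp_even
          · exact heven_all w hwp)
      refine ⟨p, c, hct.isEulerian_of_forall_mem ?_⟩
      intro e
      refine Sym2.ind (fun a b he => ?_) e
      exact hcc a b ((G.mem_edgeSet).mp he) (hG.preconnected p a)
    · -- exactly one other odd vertex
      obtain ⟨x, hx⟩ := Finset.card_eq_one.mp h1
      have hxmem : x ∈ Finset.univ.filter (fun w : V => w ≠ p ∧ Odd (G.degree w)) := by
        rw [hx]; exact Finset.mem_singleton_self x
      rw [Finset.mem_filter] at hxmem
      obtain ⟨-, hxp, hxodd⟩ := hxmem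
      have heven_other : ∀ w : V, w ≠ p → w ≠ x → Even (G.degree w) := by
        intro w hwp hwx
        by_contra hwe
        have : w ∈ (Finset.univ.filter (fun w : V => w ≠ p ∧ Odd (G.degree w))) := by
          rw [Finset.mem_filter]
          exact ⟨Finset.mem_univ w, hwp, Nat.not_even_iff_odd.mp hwe⟩
        rw [hx, Finset.mem_singleton] at this
        exact hwx this
      have hp_odd : Odd (G.degree p) := by
        by_contra hpe
        have hpe' : Even (G.degree p) := Nat.not_odd_iff_even.mp hpe
        have hO : (Finset.univ.filter fun w : V => Odd (G.degree w)) = {x} := by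
          ext w
          simp only [Finset.mem_filter, Finset.mem_univ, true_and, Finset.mem_singleton]
          constructor
          · intro hw
            by_cases hwp : w = p
            · exact absurd (hwp ▸ hpe') (Nat.not_even_iff_odd.mpr hw)
            · by_contra hwx
              exact Nat.not_even_iff_odd.mpr hw (heven_other w hwp hwx)
          · rintro rfl; exact hxodd
        have heven := G.even_card_odd_degree_vertices
        rw [show ({v | Odd (G.degree v)} : Finset V)
          = Finset.univ.filter (fun w : V => Odd (G.degree w)) from rfl, hO] at heven
        simp at heven
      obtain ⟨W, hWt, hWc⟩ := (euler_main (G.edgeFinset.card) G le_rfl).2 p x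
        (fun hh => hxp hh.symm) hp_odd hxodd
        (fun w hwp hwx _ => heven_other w hwp hwx)
      refine ⟨x, W, hWt.isEulerian_of_forall_mem ?_⟩
      intro e
      refine Sym2.ind (fun a b he => ?_) e
      exact hWc a b ((G.mem_edgeSet).mp he) (Or.inl (hG.preconnected p a))
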